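/- Let x ∈ ℝ^m and X ∈ S^m be such that [[1, x^T],[x, X]] is positive semidefinite, diag(X) = x, ⟨J_m, X⟩ = n², tr(X) = n, and ⟨u_i u_i^T, X⟩ = ⟨v_i v_i^T, X⟩ = 1 for all i ∈ N. If additionally X has all entries nonnegative, then X_{ef} = 0 for every pair (e, f) ∈ Z of distinct arcs that start at the same node or end at the same node. -/

import Mathlib

open Matrix

noncomputable section

/-- Trace inner product `⟨M, N⟩ = tr(Mᵀ N)` on real matrices. -/
def tip {k l : ℕ} (M N : Matrix (Fin k) (Fin l) ℝ) : ℝ := (Mᵀ * N).trace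

/-- The extended matrix `[[1, xᵀ], [x, X]]`, with the top row/column indexed by `0`. -/
def extM {m : ℕ} (x : Fin m → ℝ) (X : Matrix (Fin m) (Fin m) ℝ) :
    Matrix (Fin (m + 1)) (Fin (m + 1)) ℝ :=
  Matrix.of (Fin.cons (Fin.cons 1 x) (fun i => Fin.cons (x i) (fun j => X i j)))

lemma extM_quad {m : ℕ} (x : Fin m → ℝ) (X : Matrix (Fin m) (Fin m) ℝ) (w : Fin m → ℝ) :
    star (Fin.cons (-1 : ℝ) w) ⬝ᵥ (extM x X *ᵥ Fin.cons (-1) w) =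
      1 - 2 * ∑ e, w e * x e + ∑ a, ∑ b, w a * (w b * X a b) := by
  simp [dotProduct, mulVec, extM, Fin.sum_univ_succ, Finset.mul_sum,
    Finset.sum_sub_distrib, mul_comm, mul_left_comm, mul_add, sub_mul, two_mul]
  simp [Finset.sum_add_distrib, Finset.sum_neg_distrib]
  ring_nf
  rw [Finset.sum_mul]
  ring

lemma aux_zero (n m : ℕ) (g : Fin m → Fin n) (u : Fin n → Fin m → ℝ)
    (hu : ∀ i e, u i e = if g e = i then 1 else 0)
    (x : Fin m → ℝ) (X : Matrix (Fin m) (Fin m) ℝ)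
    (hpsd : (extM x X).PosSemidef)
    (hdiag : X.diag = x)
    (htrace : X.trace = (n : ℝ))
    (hq : ∀ i, tip (vecMulVec (u i) (u i)) X = 1)
    (hnonneg : ∀ e f, 0 ≤ X e f) :
    ∀ e f : Fin m, e ≠ f → g e = g f → X e f = 0 := by
  have hxX : ∀ e, x e = X e e := fun e => by rw [← hdiag]; rfl
  have hunn : ∀ i e, 0 ≤ u i e := by
    intro i e; rw [hu]; split_ifs <;> norm_num
  have hq2 : ∀ i, ∑ a, ∑ b, u i a * (u i b * X a b) = 1 := by
    intro i
    have h := hq i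
    unfold tip at h
    rw [Matrix.trace] at h
    simp only [Matrix.diag, Matrix.mul_apply, Matrix.transpose_apply, vecMulVec_apply] at h
    rw [Finset.sum_comm] at h
    rw [← h]
    exact Finset.sum_congr rfl fun a _ => Finset.sum_congr rfl fun b _ => by ring
  set s : Fin n → ℝ := fun i => ∑ e, u i e * x e with hs
  have hsle : ∀ i, s i ≤ 1 := by
    intro i
    have h0 := hpsd.dotProduct_mulVec_nonneg (Fin.cons (-1) (u i))
    rw [extM_quad, hq2 i] at h0
    simp only [hs]
    linarith
  have hsum : ∑ i, s i = (n : ℝ) := by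
    rw [hs, Finset.sum_comm]
    have : ∀ e : Fin m, ∑ i, u i e * x e = x e := by
      intro e; simp [hu, ite_mul]
    rw [Finset.sum_congr rfl fun e _ => this e]
    rw [← htrace]
    simp [Matrix.trace, Matrix.diag, hxX]
  have hseq : ∀ i, s i = 1 := by
    intro i
    rcases lt_or_eq_of_le (hsle i) with hlt | heq
    · exfalso
      have : ∑ j, s j < ∑ _j : Fin n, (1 : ℝ) :=
        Finset.sum_lt_sum (fun j _ => hsle j) ⟨i, Finset.mem_univ i, hlt⟩
      rw [hsum] at this
      simp at this
    · exact heq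
  intro e f hef hgf
  set i := g e with hi
  have key : ∑ p : Fin m × Fin m, u i p.1 * (u i p.2 * X p.1 p.2) = 1 := by
    rw [Fintype.sum_prod_type]; exact hq2 i
  set S : Finset (Fin m × Fin m) := insert (e, f) (Finset.univ.image fun a => (a, a)) with hS
  have hnotmem : (e, f) ∉ Finset.univ.image fun a : Fin m => (a, a) := by
    simp only [Finset.mem_image, Finset.mem_univ, true_and, not_exists]
    intro a h
    obtain ⟨h1, h2⟩ := Prod.ext_iff.mp h
    exact hef (h1.symm.trans h2)
  have hdiagsum : ∑ a, u i a * (u i a * X a a) = s i := by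
    refine Finset.sum_congr rfl fun a _ => ?_
    by_cases h : g a = i <;> simp [hu, h, hxX]
  have hSsum : ∑ p ∈ S, u i p.1 * (u i p.2 * X p.1 p.2) = X e f + 1 := by
    rw [hS, Finset.sum_insert hnotmem, Finset.sum_image (fun a _ b _ h => (Prod.mk.injEq .. ▸ h).1)]
    have h1 : u i e = 1 := by rw [hu]; simp [hi]
    have h2 : u i f = 1 := by rw [hu]; simp [hi, ← hgf]
    rw [hdiagsum, hseq i]
    simp [h1, h2]
  have hle : ∑ p ∈ S, u i p.1 * (u i p.2 * X p.1 p.2) ≤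
      ∑ p : Fin m × Fin m, u i p.1 * (u i p.2 * X p.1 p.2) := by
    apply Finset.sum_le_sum_of_subset_of_nonneg (Finset.subset_univ S)
    intro p _ _
    exact mul_nonneg (hunn _ _) (mul_nonneg (hunn _ _) (hnonneg _ _))
  rw [key, hSsum] at hle
  have := hnonneg e f
  linarith

theorem zero_structure_redundant
    (n m : ℕ) (src tgt : Fin m → Fin n)
    (h_simple : ∀ e f : Fin m, src e = src f → tgt e = tgt f → e = f)
    (h_noloop : ∀ e : Fin m, src e ≠ tgt e)
    (u v : Fin n → Fin m → ℝ)
    (hu : ∀ i e, u i e = if src e = i then 1 else 0)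
    (hv : ∀ i e, v i e = if tgt e = i then 1 else 0)
    (x : Fin m → ℝ) (X : Matrix (Fin m) (Fin m) ℝ)
    (hXsymm : X.IsSymm)
    (hpsd : (extM x X).PosSemidef)
    (hdiag : X.diag = x)
    (hallones : tip (Matrix.of fun _ _ => (1 : ℝ)) X = (n : ℝ) ^ 2)
    (htrace : X.trace = (n : ℝ))
    (hTypeI : ∀ i, tip (vecMulVec (u i) (u i)) X = 1 ∧ tip (vecMulVec (v i) (v i)) X = 1)
    (hnonneg : ∀ e f, 0 ≤ X e f) :
    ∀ e f : Fin m, e ≠ f → (src e = src f ∨ tgt e = tgt f) → X e f = 0 := by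
  intro e f hef h
  rcases h with h | h
  · exact aux_zero n m src u hu x X hpsd hdiag htrace (fun i => (hTypeI i).1) hnonneg e f hef h
  · exact aux_zero n m tgt v hv x X hpsd hdiag htrace (fun i => (hTypeI i).2) hnonneg e f hef h
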